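/- arXiv:1810.08679 — 3 statements merged into one kernel-verified Lean document; each statement's English description precedes it below -/
import Mathlib

section
/- There exists a constant c > 0 such that for all real x ≥ 2, |(Ā ∖ A)_{≤x}| ≤ c·√x·(log x)². -/
/-- `A` is the set of primes `p` with `p ≡ 2 (mod 3)` such that there exist
`α, β, γ ≥ 1` and primes `q, r`, both coprime to `6`, with
`p + 1 = 2^α * 3^β * q` and `p - 1 = 2^γ * r`. -/
def A : Set ℕ :=
  {p | p.Prime ∧ p % 3 = 2 ∧ ∃ α β γ q r : ℕ,
    1 ≤ α ∧ 1 ≤ β ∧ 1 ≤ γ ∧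
    q.Prime ∧ r.Prime ∧ Nat.Coprime q 6 ∧ Nat.Coprime r 6 ∧
    p + 1 = 2 ^ α * 3 ^ β * q ∧ p - 1 = 2 ^ γ * r}

/-- `Abar` is the set of primes `p` with `p ≡ 2 (mod 3)` such that there exist
`α, β, γ, μ, ν ≥ 1` and primes `q, r`, both coprime to `6`, with
`p + 1 = 2^α * 3^β * q^μ` and `p - 1 = 2^γ * r^ν`. -/
def Abar : Set ℕ :=
  {p | p.Prime ∧ p % 3 = 2 ∧ ∃ α β γ μ ν q r : ℕ,
    1 ≤ α ∧ 1 ≤ β ∧ 1 ≤ γ ∧ 1 ≤ μ ∧ 1 ≤ ν ∧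
    q.Prime ∧ r.Prime ∧ Nat.Coprime q 6 ∧ Nat.Coprime r 6 ∧
    p + 1 = 2 ^ α * 3 ^ β * q ^ μ ∧ p - 1 = 2 ^ γ * r ^ ν}

lemma sup_pf (a b c q : ℕ) (hq : q.Prime) (hq6 : Nat.Coprime q 6) (hc : 1 ≤ c) :
    (2 ^ a * 3 ^ b * q ^ c).primeFactors.sup id = q := by
  have h2 : q ≠ 2 := by rintro rfl; revert hq6; decide
  have h3 : q ≠ 3 := by rintro rfl; revert hq6; decide
  have h4 : q ≠ 4 := by rintro rfl; exact absurd hq (by decide)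
  have h5 : 5 ≤ q := by have := hq.two_le; omega
  have hN : 2 ^ a * 3 ^ b * q ^ c ≠ 0 := by positivity
  have hqmem : q ∈ (2 ^ a * 3 ^ b * q ^ c).primeFactors :=
    Nat.mem_primeFactors.mpr ⟨hq, (dvd_pow_self q (by omega)).mul_left _, hN⟩
  refine le_antisymm (Finset.sup_le ?_) (Finset.le_sup (f := id) hqmem)
  intro s hs
  obtain ⟨hsp, hsd, -⟩ := Nat.mem_primeFactors.mp hs
  rcases (Nat.Prime.dvd_mul hsp).mp hsd with h | h
  · rcases (Nat.Prime.dvd_mul hsp).mp h with h' | h'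
    · have hs2 : s = 2 :=
        (Nat.prime_dvd_prime_iff_eq hsp Nat.prime_two).mp (hsp.dvd_of_dvd_pow h')
      simp only [id_eq, hs2]; omega
    · have hs3 : s = 3 :=
        (Nat.prime_dvd_prime_iff_eq hsp Nat.prime_three).mp (hsp.dvd_of_dvd_pow h')
      simp only [id_eq, hs3]; omega
  · have hsq : s = q :=
      (Nat.prime_dvd_prime_iff_eq hsp hq).mp (hsp.dvd_of_dvd_pow h)
    simp [hsq]

lemma pow_split (b n : ℕ) : b ^ n = (b ^ (n / 2)) ^ 2 * b ^ (n % 2) := by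
  rw [← pow_mul, ← pow_add]; congr 1; omega

def g1 (v : ℕ × ℕ) : ℕ :=
  v.2 ^ 2 * (2 ^ (v.1 % 2) * 3 ^ (v.1 / 2 % 2) * (v.2.primeFactors.sup id) ^ (v.1 / 4 % 2)) - 1

def g2 (v : ℕ × ℕ) : ℕ :=
  v.2 ^ 2 * (2 ^ (v.1 % 2) * (v.2.primeFactors.sup id) ^ (v.1 / 2 % 2)) + 1

theorem Abar_diff_A_small :
    ∃ c : ℝ, 0 < c ∧ ∀ x : ℝ, 2 ≤ x →
      (((Abar \ A) ∩ {n : ℕ | (n : ℝ) ≤ x}).ncard : ℝ) ≤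
        c * Real.sqrt x * (Real.log x) ^ 2 := by
  have hl2 : 0 < Real.log 2 := Real.log_pos (by norm_num)
  refine ⟨64 / (Real.log 2) ^ 2, by positivity, ?_⟩
  intro x hx
  have hx0 : (0:ℝ) < x := by linarith
  have hsx : (0:ℝ) ≤ Real.sqrt x := Real.sqrt_nonneg x
  have hsx1 : (1:ℝ) ≤ Real.sqrt x := by
    rw [show (1:ℝ) = Real.sqrt 1 by simp]
    exact Real.sqrt_le_sqrt (by linarith)
  have hsq : Real.sqrt x ^ 2 = x := Real.sq_sqrt hx0.le
  set K : ℕ := ⌈2 * Real.sqrt x⌉₊ with hK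
  set R : Finset (ℕ × ℕ) := Finset.range 8 ×ˢ Finset.range (K + 1) with hR
  have hsub : (Abar \ A) ∩ {n : ℕ | (n : ℝ) ≤ x} ⊆
      (g1 '' ↑R) ∪ (g2 '' ↑R) := by
    rintro p ⟨⟨hAb, hA⟩, hpx⟩
    simp only [Set.mem_setOf_eq] at hpx
    obtain ⟨hp, hp3, α, β, γ, μ, ν, q, r, hα, hβ, hγ, hμ, hν, hq, hr, hq6, hr6,
      hplus, hminus⟩ := hAb
    have hp2 : 2 ≤ p := hp.two_le
    have hcase : 2 ≤ μ ∨ 2 ≤ ν := by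
      by_contra hco
      push_neg at hco
      obtain ⟨h1, h2⟩ := hco
      have hμ1 : μ = 1 := by omega
      have hν1 : ν = 1 := by omega
      subst hμ1; subst hν1
      exact hA ⟨hp, hp3, α, β, γ, q, r, hα, hβ, hγ, hq, hr, hq6, hr6,
        by simpa using hplus, by simpa using hminus⟩
    rcases hcase with hc2 | hc2
    · -- μ ≥ 2 : use g1
      left
      set k : ℕ := 2 ^ (α / 2) * 3 ^ (β / 2) * q ^ (μ / 2) with hk
      set e : ℕ := α % 2 + 2 * (β % 2) + 4 * (μ % 2) with he
      have hsup : k.primeFactors.sup id = q := sup_pf _ _ _ _ hq hq6 (by omega)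
      have hkey : k ^ 2 * (2 ^ (e % 2) * 3 ^ (e / 2 % 2) * q ^ (e / 4 % 2))
          = 2 ^ α * 3 ^ β * q ^ μ := by
        have h1 : e % 2 = α % 2 := by omega
        have h2 : e / 2 % 2 = β % 2 := by omega
        have h3 : e / 4 % 2 = μ % 2 := by omega
        rw [h1, h2, h3, hk]
        conv_rhs => rw [pow_split 2 α, pow_split 3 β, pow_split q μ]
        ring
      have hgp : g1 (e, k) = p := by
        simp only [g1, hsup]
        rw [hkey, ← hplus]
        omega
      have hk2 : k ^ 2 ≤ p + 1 := by
        calc k ^ 2 ≤ k ^ 2 * (2 ^ (e % 2) * 3 ^ (e / 2 % 2) * q ^ (e / 4 % 2)) :=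
              Nat.le_mul_of_pos_right _
                (Nat.mul_pos (Nat.mul_pos (pow_pos two_pos _) (pow_pos (by norm_num) _))
                  (pow_pos hq.pos _))
          _ = p + 1 := by rw [hkey, hplus]
      have hkR : (k:ℝ) ≤ 2 * Real.sqrt x := by
        have h1 : ((k:ℝ)) ^ 2 ≤ x + 1 := by
          have : ((k ^ 2 : ℕ) : ℝ) ≤ ((p + 1 : ℕ) : ℝ) := Nat.cast_le.mpr hk2
          push_cast at this
          linarith
        have h2 : ((k:ℝ)) ^ 2 ≤ (2 * Real.sqrt x) ^ 2 := by nlinarith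
        exact le_of_pow_le_pow_left₀ two_ne_zero (by positivity) h2
      have hkK : k ≤ K := by
        have h1 : (k:ℝ) ≤ (K:ℝ) := le_trans hkR (Nat.le_ceil _)
        exact_mod_cast h1
      refine ⟨(e, k), ?_, hgp⟩
      simp only [hR, Finset.coe_product, Set.mem_prod, Finset.mem_coe, Finset.mem_range]
      exact ⟨by omega, by omega⟩
    · -- ν ≥ 2 : use g2
      right
      set k : ℕ := 2 ^ (γ / 2) * 3 ^ 0 * r ^ (ν / 2) with hk
      set e : ℕ := γ % 2 + 2 * (ν % 2) with he
      have hsup : k.primeFactors.sup id = r := sup_pf _ _ _ _ hr hr6 (by omega)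
      have hkey : k ^ 2 * (2 ^ (e % 2) * r ^ (e / 2 % 2)) = 2 ^ γ * r ^ ν := by
        have h1 : e % 2 = γ % 2 := by omega
        have h2 : e / 2 % 2 = ν % 2 := by omega
        rw [h1, h2, hk]
        conv_rhs => rw [pow_split 2 γ, pow_split r ν]
        ring
      have hpm : p = 2 ^ γ * r ^ ν + 1 := by omega
      have hgp : g2 (e, k) = p := by
        simp only [g2, hsup]
        rw [hkey, ← hpm]
      have hk2 : k ^ 2 ≤ p := by
        calc k ^ 2 ≤ k ^ 2 * (2 ^ (e % 2) * r ^ (e / 2 % 2)) :=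
              Nat.le_mul_of_pos_right _
                (Nat.mul_pos (pow_pos two_pos _) (pow_pos hr.pos _))
          _ = 2 ^ γ * r ^ ν := hkey
          _ ≤ p := by omega
      have hkR : (k:ℝ) ≤ 2 * Real.sqrt x := by
        have h1 : ((k:ℝ)) ^ 2 ≤ x := by
          have : ((k ^ 2 : ℕ) : ℝ) ≤ ((p : ℕ) : ℝ) := Nat.cast_le.mpr hk2
          push_cast at this
          linarith
        have h2 : ((k:ℝ)) ^ 2 ≤ (2 * Real.sqrt x) ^ 2 := by nlinarith
        exact le_of_pow_le_pow_left₀ two_ne_zero (by positivity) h2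
      have hkK : k ≤ K := by
        have h1 : (k:ℝ) ≤ (K:ℝ) := le_trans hkR (Nat.le_ceil _)
        exact_mod_cast h1
      refine ⟨(e, k), ?_, hgp⟩
      simp only [hR, Finset.coe_product, Set.mem_prod, Finset.mem_coe, Finset.mem_range]
      exact ⟨by omega, by omega⟩
  have hfin1 : (g1 '' (↑R : Set (ℕ × ℕ))).Finite := R.finite_toSet.image _
  have hfin2 : (g2 '' (↑R : Set (ℕ × ℕ))).Finite := R.finite_toSet.image _
  have hc1 : ((Abar \ A) ∩ {n : ℕ | (n : ℝ) ≤ x}).ncard ≤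
      (g1 '' ↑R ∪ g2 '' ↑R).ncard :=
    Set.ncard_le_ncard hsub (hfin1.union hfin2)
  have hc2 : (g1 '' (↑R : Set (ℕ × ℕ)) ∪ g2 '' ↑R).ncard ≤
      (g1 '' (↑R : Set (ℕ × ℕ))).ncard + (g2 '' (↑R : Set (ℕ × ℕ))).ncard :=
    Set.ncard_union_le _ _
  have hc3 : (g1 '' (↑R : Set (ℕ × ℕ))).ncard ≤ R.card := by
    calc (g1 '' (↑R : Set (ℕ × ℕ))).ncard ≤ (↑R : Set (ℕ × ℕ)).ncard :=
          Set.ncard_image_le R.finite_toSet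
      _ = R.card := Set.ncard_coe_finset R
  have hc4 : (g2 '' (↑R : Set (ℕ × ℕ))).ncard ≤ R.card := by
    calc (g2 '' (↑R : Set (ℕ × ℕ))).ncard ≤ (↑R : Set (ℕ × ℕ)).ncard :=
          Set.ncard_image_le R.finite_toSet
      _ = R.card := Set.ncard_coe_finset R
  have hcard : R.card = 8 * (K + 1) := by
    simp [hR]
  have htot : ((Abar \ A) ∩ {n : ℕ | (n : ℝ) ≤ x}).ncard ≤ 16 * (K + 1) := by omega
  have hKR : (K:ℝ) ≤ 2 * Real.sqrt x + 1 := (Nat.ceil_lt_add_one (by positivity)).le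
  have hcast : (((Abar \ A) ∩ {n : ℕ | (n : ℝ) ≤ x}).ncard : ℝ) ≤ 16 * ((K:ℝ) + 1) := by
    exact_mod_cast htot
  have h64 : (((Abar \ A) ∩ {n : ℕ | (n : ℝ) ≤ x}).ncard : ℝ) ≤ 64 * Real.sqrt x := by
    nlinarith
  have hlog : Real.log 2 ≤ Real.log x := Real.log_le_log (by norm_num) hx
  have hq1 : (1:ℝ) ≤ (Real.log x) ^ 2 / (Real.log 2) ^ 2 := by
    rw [le_div_iff₀ (by positivity)]
    nlinarith
  calc (((Abar \ A) ∩ {n : ℕ | (n : ℝ) ≤ x}).ncard : ℝ) ≤ 64 * Real.sqrt x := h64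
    _ = 64 * Real.sqrt x * 1 := by ring
    _ ≤ 64 * Real.sqrt x * ((Real.log x) ^ 2 / (Real.log 2) ^ 2) := by
        apply mul_le_mul_of_nonneg_left hq1 (by positivity)
    _ = 64 / (Real.log 2) ^ 2 * Real.sqrt x * (Real.log x) ^ 2 := by ring
end

section
/- There exist a constant c > 0 and x₀ such that for all real x ≥ x₀, the sum of |A^{1,β,γ}_{≤x}| over all pairs of integers (β, γ) with β ≥ 1, γ ≥ 2 and (log x)⁶ < 3^β·2^γ ≤ x is at most c·x/(log x)⁴. -/
open scoped Classical

/-- `A^{α,β,γ}_{≤x}`: the set of primes `p ≤ x` with `p ≡ 2 (mod 3)` for which there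
exist primes `q, r`, both coprime to `6`, with `p + 1 = 2^α 3^β q` and `p - 1 = 2^γ r`. -/
def Aabg (α β γ : ℕ) (x : ℝ) : Set ℕ :=
  {p | p.Prime ∧ (p : ℝ) ≤ x ∧ p % 3 = 2 ∧ ∃ q r : ℕ,
    q.Prime ∧ r.Prime ∧ Nat.Coprime q 6 ∧ Nat.Coprime r 6 ∧
    p + 1 = 2 ^ α * 3 ^ β * q ∧ p - 1 = 2 ^ γ * r}

lemma key_card (β γ : ℕ) (x : ℝ) (hx : 0 ≤ x) (hN : (3:ℝ)^β * 2^γ ≤ x) :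
    ((Aabg 1 β γ x).ncard : ℝ) ≤ 2 * x / ((3:ℝ)^β * 2^γ) := by
  set N : ℕ := 3^β * 2^γ with hNdef
  have hNpos : 0 < N := by positivity
  have hNr : ((N:ℝ)) = (3:ℝ)^β * 2^γ := by push_cast [hNdef]; ring
  have hmem : ∀ p ∈ Aabg 1 β γ x, 1 ≤ p ∧ (p:ℝ) ≤ x ∧ 3^β ∣ p + 1 ∧ 2^γ ∣ p - 1 := by
    rintro p ⟨hp, hpx, -, q, r, hq, hr, -, -, h1, h2⟩
    exact ⟨hp.one_lt.le, hpx, ⟨2*q, by rw [h1]; ring⟩, ⟨r, h2⟩⟩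
  have hcop : Nat.Coprime (3^β) (2^γ) := (show Nat.Coprime 3 2 by norm_num).pow β γ
  have hstep : ∀ p ∈ Aabg 1 β γ x, ∀ p' ∈ Aabg 1 β γ x, p < p' → p / N < p' / N := by
    intro p hp p' hp' hlt
    obtain ⟨hp1, -, hd3, hd2⟩ := hmem p hp
    obtain ⟨hp1', -, hd3', hd2'⟩ := hmem p' hp'
    have h3 : 3^β ∣ p' - p := by
      have h := Nat.dvd_sub hd3' hd3
      have e : (p'+1) - (p+1) = p' - p := by omega
      rwa [e] at h
    have h2 : 2^γ ∣ p' - p := by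
      have h := Nat.dvd_sub hd2' hd2
      have e : (p'-1) - (p-1) = p' - p := by omega
      rwa [e] at h
    have hNd : N ∣ p' - p := hcop.mul_dvd_of_dvd_of_dvd h3 h2
    have hge : p + N ≤ p' := by
      have := Nat.le_of_dvd (by omega) hNd
      omega
    calc p / N < p / N + 1 := Nat.lt_succ_self _
      _ = (p + N) / N := (Nat.add_div_right _ hNpos).symm
      _ ≤ p' / N := Nat.div_le_div_right hge
  have hinj : Set.InjOn (fun p => p / N) (Aabg 1 β γ x) := by
    intro p hp p' hp' h
    rcases lt_trichotomy p p' with hlt | heq | hlt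
    · exact absurd h (Nat.ne_of_lt (hstep p hp p' hp' hlt))
    · exact heq
    · exact absurd h.symm (Nat.ne_of_lt (hstep p' hp' p hp hlt))
  have hmaps : ∀ p ∈ Aabg 1 β γ x,
      (fun p => p / N) p ∈ (↑(Finset.range (⌊x⌋₊ / N + 1)) : Set ℕ) := by
    intro p hp
    obtain ⟨-, hpx, -, -⟩ := hmem p hp
    have hple : p ≤ ⌊x⌋₊ := Nat.le_floor hpx
    simp only [Finset.coe_range, Set.mem_Iio]
    exact Nat.lt_succ_of_le (Nat.div_le_div_right hple)
  have hcard := Set.ncard_le_ncard_of_injOn _ hmaps hinj (Finset.finite_toSet _)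
  rw [Set.ncard_coe_finset, Finset.card_range] at hcard
  have hNr_pos : (0:ℝ) < (3:ℝ)^β * 2^γ := by positivity
  have h1 : ((⌊x⌋₊ / N + 1 : ℕ) : ℝ) ≤ x / ((3:ℝ)^β * 2^γ) + 1 := by
    push_cast
    have h2 : ((⌊x⌋₊ / N : ℕ) : ℝ) ≤ (⌊x⌋₊ : ℝ) / (N:ℝ) := Nat.cast_div_le
    have h3 : (⌊x⌋₊ : ℝ) ≤ x := Nat.floor_le hx
    have : (⌊x⌋₊ : ℝ) / (N:ℝ) ≤ x / ((3:ℝ)^β * 2^γ) := by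
      rw [hNr]; gcongr
    linarith
  have h4 : (1:ℝ) ≤ x / ((3:ℝ)^β * 2^γ) := (one_le_div hNr_pos).mpr hN
  calc ((Aabg 1 β γ x).ncard : ℝ) ≤ ((⌊x⌋₊ / N + 1 : ℕ) : ℝ) := by exact_mod_cast hcard
    _ ≤ x / ((3:ℝ)^β * 2^γ) + 1 := h1
    _ ≤ x / ((3:ℝ)^β * 2^γ) + x / ((3:ℝ)^β * 2^γ) := by linarith
    _ = 2 * x / ((3:ℝ)^β * 2^γ) := by ring

theorem tail_sum_bound :
    ∃ c : ℝ, 0 < c ∧ ∃ x₀ : ℝ, ∀ x : ℝ, x₀ ≤ x →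
      (∑' bg : ℕ × ℕ,
        if 1 ≤ bg.1 ∧ 2 ≤ bg.2 ∧ (Real.log x) ^ 6 < (3 : ℝ) ^ bg.1 * 2 ^ bg.2 ∧
            (3 : ℝ) ^ bg.1 * 2 ^ bg.2 ≤ x
        then ((Aabg 1 bg.1 bg.2 x).ncard : ℝ) else 0) ≤
      c * x / (Real.log x) ^ 4 := by
  refine ⟨18, by norm_num, Real.exp 2, fun x hx => ?_⟩
  have hx0 : (0:ℝ) < x := lt_of_lt_of_le (Real.exp_pos 2) hx
  have hlog : 2 ≤ Real.log x := by
    have := Real.log_le_log (Real.exp_pos 2) hx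
    rwa [Real.log_exp] at this
  have hlx : (0:ℝ) < Real.log x := by linarith
  have hl2 : (0:ℝ) < Real.log 2 := Real.log_pos (by norm_num)
  have hl2' : (1:ℝ)/2 < Real.log 2 := by
    have := Real.log_two_gt_d9; linarith
  set B : ℕ := ⌊Real.log x / Real.log 2⌋₊ + 1 with hB
  set s : Finset (ℕ × ℕ) := Finset.range B ×ˢ Finset.range B with hs
  have key2 : ∀ (n : ℕ), (3:ℝ)^n ≤ x → n < B := by
    intro n hn
    have h1 : (n:ℝ) * Real.log 3 ≤ Real.log x := by
      have := Real.log_le_log (by positivity) hn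
      rwa [Real.log_pow] at this
    have hl3 : Real.log 2 ≤ Real.log 3 := Real.log_le_log (by norm_num) (by norm_num)
    have h2 : (n:ℝ) ≤ Real.log x / Real.log 2 := by
      rw [le_div_iff₀ hl2]
      calc (n:ℝ) * Real.log 2 ≤ (n:ℝ) * Real.log 3 := by
            apply mul_le_mul_of_nonneg_left hl3 (Nat.cast_nonneg n)
        _ ≤ Real.log x := h1
    exact Nat.lt_succ_of_le (Nat.le_floor h2)
  have key2' : ∀ (n : ℕ), (2:ℝ)^n ≤ x → n < B := by
    intro n hn
    have h1 : (n:ℝ) * Real.log 2 ≤ Real.log x := by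
      have := Real.log_le_log (by positivity) hn
      rwa [Real.log_pow] at this
    have h2 : (n:ℝ) ≤ Real.log x / Real.log 2 := by
      rw [le_div_iff₀ hl2]; exact h1
    exact Nat.lt_succ_of_le (Nat.le_floor h2)
  have hsupp : ∀ bg : ℕ × ℕ, bg ∉ s →
      (if 1 ≤ bg.1 ∧ 2 ≤ bg.2 ∧ (Real.log x) ^ 6 < (3 : ℝ) ^ bg.1 * 2 ^ bg.2 ∧
            (3 : ℝ) ^ bg.1 * 2 ^ bg.2 ≤ x
        then ((Aabg 1 bg.1 bg.2 x).ncard : ℝ) else 0) = 0 := by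
    intro bg hbg
    rw [if_neg]
    rintro ⟨h1, h2, h3, h4⟩
    apply hbg
    rw [hs, Finset.mem_product, Finset.mem_range, Finset.mem_range]
    constructor
    · apply key2
      have ha : (1:ℝ) ≤ (2:ℝ)^bg.2 := one_le_pow₀ (by norm_num)
      have hb : (0:ℝ) < (3:ℝ)^bg.1 := by positivity
      nlinarith
    · apply key2'
      have ha : (1:ℝ) ≤ (3:ℝ)^bg.1 := one_le_pow₀ (by norm_num)
      have hb : (0:ℝ) < (2:ℝ)^bg.2 := by positivity
      nlinarith
  rw [tsum_eq_sum hsupp]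
  have hterm : ∀ bg ∈ s,
      (if 1 ≤ bg.1 ∧ 2 ≤ bg.2 ∧ (Real.log x) ^ 6 < (3 : ℝ) ^ bg.1 * 2 ^ bg.2 ∧
            (3 : ℝ) ^ bg.1 * 2 ^ bg.2 ≤ x
        then ((Aabg 1 bg.1 bg.2 x).ncard : ℝ) else 0) ≤ 2 * x / (Real.log x)^6 := by
    intro bg _
    split_ifs with h
    · obtain ⟨-, -, h3, h4⟩ := h
      calc ((Aabg 1 bg.1 bg.2 x).ncard : ℝ) ≤ 2 * x / ((3:ℝ)^bg.1 * 2^bg.2) :=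
            key_card bg.1 bg.2 x hx0.le h4
        _ ≤ 2 * x / (Real.log x)^6 := by
            apply div_le_div_of_nonneg_left (by positivity) (by positivity) h3.le
    · positivity
  calc (∑ bg ∈ s, if 1 ≤ bg.1 ∧ 2 ≤ bg.2 ∧ (Real.log x) ^ 6 < (3 : ℝ) ^ bg.1 * 2 ^ bg.2 ∧
            (3 : ℝ) ^ bg.1 * 2 ^ bg.2 ≤ x
        then ((Aabg 1 bg.1 bg.2 x).ncard : ℝ) else 0)
      ≤ s.card • (2 * x / (Real.log x)^6) := Finset.sum_le_card_nsmul s _ _ hterm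
    _ = (B * B : ℕ) * (2 * x / (Real.log x)^6) := by
        simp [hs, Finset.card_product, Finset.card_range, nsmul_eq_mul]
    _ ≤ (3 * Real.log x) * (3 * Real.log x) * (2 * x / (Real.log x)^6) := by
        have hBle : (B:ℝ) ≤ 3 * Real.log x := by
          have h1 : (⌊Real.log x / Real.log 2⌋₊ : ℝ) ≤ Real.log x / Real.log 2 :=
            Nat.floor_le (by positivity)
          have h2 : Real.log x / Real.log 2 ≤ 2 * Real.log x := by
            rw [div_le_iff₀ hl2]
            nlinarith
          have : (B:ℝ) = (⌊Real.log x / Real.log 2⌋₊ : ℝ) + 1 := by rw [hB]; push_cast; ring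
          linarith
        have hB0 : (0:ℝ) ≤ (B:ℕ) := Nat.cast_nonneg B
        rw [Nat.cast_mul]
        apply mul_le_mul _ le_rfl (by positivity) (by positivity)
        exact mul_le_mul hBle hBle hB0 (by positivity)
    _ = 18 * x / (Real.log x)^4 := by
        field_simp
        ring
end

section
/- The number of primes p ≤ x for which there exist integers α, β ≥ 1, an integer μ ≥ 2 and a prime q with p + 1 = 2^α·3^β·q^μ is O(√x·(log x)²); that is, there is a constant c > 0 such that for all x ≥ 2 this count is at most c·√x·(log x)². -/
theorem count_higher_power_small :
    ∃ c : ℝ, 0 < c ∧ ∀ x : ℝ, 2 ≤ x →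
      ((Set.ncard {p : ℕ | p.Prime ∧ (p : ℝ) ≤ x ∧ ∃ α β μ q : ℕ,
          1 ≤ α ∧ 1 ≤ β ∧ 2 ≤ μ ∧ q.Prime ∧ p + 1 = 2 ^ α * 3 ^ β * q ^ μ}) : ℝ) ≤
        c * Real.sqrt x * (Real.log x) ^ 2 := by
  refine ⟨216, by norm_num, fun x hx => ?_⟩
  have hx0 : (0:ℝ) < x := by linarith
  set n : ℕ := ⌊x⌋₊ with hn
  have hnx : (n : ℝ) ≤ x := Nat.floor_le (le_of_lt hx0)
  set L : ℕ := Nat.log 2 (n+1) with hL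
  set R : ℕ := Nat.sqrt (n+1) with hR
  set g : ℕ × ℕ × ℕ × ℕ → ℕ :=
    fun t => 2 ^ t.1 * 3 ^ t.2.1 * t.2.2.1 ^ 2 * (t.2.2.1.minFac) ^ t.2.2.2 - 1 with hg
  set S : Finset (ℕ × ℕ × ℕ × ℕ) :=
    (Finset.range (L+1)) ×ˢ (Finset.range (L+1)) ×ˢ (Finset.range (R+1)) ×ˢ (Finset.range 2)
    with hS
  have hsub : {p : ℕ | p.Prime ∧ (p : ℝ) ≤ x ∧ ∃ α β μ q : ℕ,
      1 ≤ α ∧ 1 ≤ β ∧ 2 ≤ μ ∧ q.Prime ∧ p + 1 = 2 ^ α * 3 ^ β * q ^ μ} ⊆ ↑(S.image g) := by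
    rintro p ⟨hpp, hpx, α, β, μ, q, hα, hβ, hμ, hq, hfac⟩
    have hpn : p ≤ n := Nat.le_floor hpx
    have hpn1 : p + 1 ≤ n + 1 := by omega
    set k := μ / 2 with hk
    set ε := μ % 2 with hε
    have hkμ : 2 * k + ε = μ := Nat.div_add_mod μ 2
    have hk1 : 1 ≤ k := by omega
    have hqμ : q ^ μ = (q ^ k) ^ 2 * q ^ ε := by
      rw [← pow_mul, ← pow_add]
      congr 1
      omega
    have hmf : (q ^ k).minFac = q := hq.pow_minFac (by omega)
    have hdvd2 : 2 ^ α ≤ p + 1 := Nat.le_of_dvd (by omega) ⟨3 ^ β * q ^ μ, by rw [hfac]; ring⟩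
    have hdvd3 : 3 ^ β ≤ p + 1 := Nat.le_of_dvd (by omega) ⟨2 ^ α * q ^ μ, by rw [hfac]; ring⟩
    have hdvdq : q ^ μ ≤ p + 1 := Nat.le_of_dvd (by omega) ⟨2 ^ α * 3 ^ β, by rw [hfac]; ring⟩
    have hαL : α ≤ L := by
      refine (Nat.le_log_iff_pow_le one_lt_two (by omega)).mpr ?_
      omega
    have hβL : β ≤ L := by
      refine (Nat.le_log_iff_pow_le one_lt_two (by omega)).mpr ?_
      have h23 : 2 ^ β ≤ 3 ^ β := Nat.pow_le_pow_left (by norm_num) β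
      omega
    have hrR : q ^ k ≤ R := by
      refine Nat.le_sqrt.mpr ?_
      have h1 : q ^ k * q ^ k = q ^ (2 * k) := by rw [← pow_add]; congr 1; omega
      have h2 : q ^ (2 * k) ≤ q ^ μ := Nat.pow_le_pow_right hq.one_lt.le (by omega)
      omega
    have hε2 : ε < 2 := Nat.mod_lt μ (by norm_num)
    simp only [Finset.coe_image, Set.mem_image, Finset.mem_coe]
    refine ⟨(α, β, q ^ k, ε), ?_, ?_⟩
    · simp only [hS, Finset.mem_product, Finset.mem_range]
      exact ⟨by omega, by omega, by omega, hε2⟩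
    · simp only [hg, hmf]
      have hkey : 2 ^ α * 3 ^ β * (q ^ k) ^ 2 * q ^ ε = p + 1 := by
        rw [hfac, hqμ]; ring
      omega
  have hfin : (↑(S.image g) : Set ℕ).Finite := Finset.finite_toSet _
  have hcard1 := Set.ncard_le_ncard hsub hfin
  rw [Set.ncard_coe_finset] at hcard1
  have hcard2 : (S.image g).card ≤ S.card := Finset.card_image_le
  have hScard : S.card = (L+1) * ((L+1) * ((R+1) * 2)) := by
    simp [hS, Finset.card_product]
  -- real estimates
  have hlog2 : (0.6931471803:ℝ) < Real.log 2 := Real.log_two_gt_d9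
  have hlogx2 : Real.log 2 ≤ Real.log x := Real.log_le_log (by norm_num) hx
  have h2x : (n:ℝ) + 1 ≤ 2 * x := by linarith
  have hA : (L:ℝ) ≤ 4 * Real.log x := by
    have hp2 : (2:ℝ) ^ L ≤ (n:ℝ) + 1 := by
      exact_mod_cast Nat.pow_log_le_self 2 (show n + 1 ≠ 0 by omega)
    have hle : Real.log ((2:ℝ) ^ L) ≤ Real.log (2 * x) :=
      Real.log_le_log (by positivity) (hp2.trans h2x)
    rw [Real.log_pow, Real.log_mul (by norm_num) (ne_of_gt hx0)] at hle
    nlinarith [(Nat.cast_nonneg L : (0:ℝ) ≤ (L:ℝ))]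
  have hA1 : (L:ℝ) + 1 ≤ 6 * Real.log x := by linarith
  have hB : (R:ℝ) + 1 ≤ 3 * Real.sqrt x := by
    have hr2 : (R:ℝ) ^ 2 ≤ (n:ℝ) + 1 := by
      exact_mod_cast Nat.sqrt_le' (n+1)
    have hRs : (R:ℝ) ≤ Real.sqrt (2 * x) := by
      have : Real.sqrt ((R:ℝ)^2) ≤ Real.sqrt (2 * x) := by
        apply Real.sqrt_le_sqrt
        nlinarith
      rwa [Real.sqrt_sq (Nat.cast_nonneg R)] at this
    have hmul : Real.sqrt (2 * x) = Real.sqrt 2 * Real.sqrt x := Real.sqrt_mul (by norm_num) x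
    have hs2 : Real.sqrt 2 ≤ 3/2 := by
      rw [show (3:ℝ)/2 = Real.sqrt ((3/2)^2) from (Real.sqrt_sq (by norm_num)).symm]
      exact Real.sqrt_le_sqrt (by norm_num)
    have hs1 : (1:ℝ) ≤ Real.sqrt x := by
      rw [show (1:ℝ) = Real.sqrt 1 from (Real.sqrt_one).symm]
      exact Real.sqrt_le_sqrt (by linarith)
    have hsx : (0:ℝ) ≤ Real.sqrt x := Real.sqrt_nonneg x
    nlinarith
  -- combine
  have hA0 : (0:ℝ) ≤ (L:ℝ) + 1 := by positivity
  have hB0 : (0:ℝ) ≤ (R:ℝ) + 1 := by positivity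
  have h6 : (0:ℝ) ≤ 6 * Real.log x := le_trans hA0 hA1
  have h3 : (0:ℝ) ≤ 3 * Real.sqrt x := le_trans hB0 hB
  have e1 : ((R:ℝ)+1) * 2 ≤ (3 * Real.sqrt x) * 2 := by linarith
  have e2 : ((L:ℝ)+1) * (((R:ℝ)+1) * 2) ≤ (6 * Real.log x) * ((3 * Real.sqrt x) * 2) :=
    mul_le_mul hA1 e1 (by linarith) h6
  have e3 : ((L:ℝ)+1) * (((L:ℝ)+1) * (((R:ℝ)+1) * 2)) ≤
      (6 * Real.log x) * ((6 * Real.log x) * ((3 * Real.sqrt x) * 2)) :=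
    mul_le_mul hA1 e2 (by positivity) h6
  calc ((Set.ncard {p : ℕ | p.Prime ∧ (p : ℝ) ≤ x ∧ ∃ α β μ q : ℕ,
          1 ≤ α ∧ 1 ≤ β ∧ 2 ≤ μ ∧ q.Prime ∧ p + 1 = 2 ^ α * 3 ^ β * q ^ μ}) : ℝ)
      ≤ ((S.card : ℕ) : ℝ) := by exact_mod_cast le_trans hcard1 hcard2
    _ = ((L:ℝ)+1) * (((L:ℝ)+1) * (((R:ℝ)+1) * 2)) := by rw [hScard]; push_cast; ring
    _ ≤ (6 * Real.log x) * ((6 * Real.log x) * ((3 * Real.sqrt x) * 2)) := e3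
    _ = 216 * Real.sqrt x * (Real.log x) ^ 2 := by ring
end
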